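/- (Bihari–LaSalle-type bound, special case.) Let a, b > 0 and let u : [0,1] → [0,∞) be a continuously differentiable function satisfying u'(t) ≤ a·u(t) + b·u(t)² for all t ∈ [0,1], with u(0) ≤ δ for some δ ≥ 0. If δ < a/(b·(e^a − 1)), then u(1) ≤ (a·e^a·δ)/(a − b·(e^a − 1)·δ). -/

import Mathlib

open Set

/-- Bihari–LaSalle-type bound: if `u' ≤ a u + b u²` on `[0,1]`, `u ≥ 0`, `u 0 ≤ δ`, and
`δ < a / (b (e^a - 1))`, then `u 1 ≤ a e^a δ / (a - b (e^a - 1) δ)`. -/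
theorem stmt_13 (a b δ : ℝ) (ha : 0 < a) (hb : 0 < b) (hδ : 0 ≤ δ)
    (u u' : ℝ → ℝ)
    (hpos : ∀ t ∈ Set.Icc (0:ℝ) 1, 0 ≤ u t)
    (hderiv : ∀ t ∈ Set.Icc (0:ℝ) 1, HasDerivAt u (u' t) t)
    (hcont : ContinuousOn u' (Set.Icc (0:ℝ) 1))
    (hineq : ∀ t ∈ Set.Icc (0:ℝ) 1, u' t ≤ a * u t + b * (u t) ^ 2)
    (h0 : u 0 ≤ δ)
    (hsmall : δ < a / (b * (Real.exp a - 1))) :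
    u 1 ≤ a * Real.exp a * δ / (a - b * (Real.exp a - 1) * δ) := by
  have he1 : 0 < Real.exp a - 1 := by
    nlinarith [Real.add_one_le_exp a]
  have hA : 0 < a - b * (Real.exp a - 1) * δ := by
    rw [lt_div_iff₀ (by positivity)] at hsmall
    nlinarith
  set z : ℝ → ℝ := fun t => u t / (a + b * u t) with hzdef
  set z' : ℝ → ℝ := fun t => a * u' t / (a + b * u t) ^ 2 with hz'def
  have hd : ∀ t ∈ Set.Icc (0:ℝ) 1, 0 < a + b * u t := by
    intro t ht
    have := hpos t ht
    positivity
  have hzderiv : ∀ t ∈ Set.Icc (0:ℝ) 1, HasDerivAt z (z' t) t := by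
    intro t ht
    have h1 := hderiv t ht
    have h2 : HasDerivAt (fun s => a + b * u s) (b * u' t) t :=
      (h1.const_mul b).const_add a
    have h3 := h1.div h2 (ne_of_gt (hd t ht))
    have hnum : u' t * (a + b * u t) - u t * (b * u' t) = a * u' t := by ring
    rw [hnum] at h3
    exact h3
  have hucont : ContinuousOn u (Set.Icc (0:ℝ) 1) := fun t ht =>
    (hderiv t ht).continuousAt.continuousWithinAt
  have hzcont : ContinuousOn z (Set.Icc (0:ℝ) 1) :=
    hucont.div ((continuousOn_const.add (continuousOn_const.mul hucont)))
      (fun t ht => ne_of_gt (hd t ht))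
  have h01 : (0:ℝ) ∈ Set.Icc (0:ℝ) 1 := by norm_num
  have hz0 : z 0 ≤ δ / (a + b * δ) := by
    have hu0 : 0 ≤ u 0 := hpos 0 h01
    rw [hzdef]
    rw [div_le_div_iff₀ (hd 0 h01) (by positivity)]
    nlinarith
  have hbound : ∀ t ∈ Set.Ico (0:ℝ) 1, z' t ≤ a * z t + 0 := by
    intro t ht
    have ht' : t ∈ Set.Icc (0:ℝ) 1 := Ico_subset_Icc_self ht
    have hdt := hd t ht'
    have hut := hpos t ht'
    have hi := hineq t ht'
    rw [hz'def, hzdef]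
    simp only [add_zero]
    rw [div_le_iff₀ (by positivity)]
    have hexp : a * (u t / (a + b * u t)) * (a + b * u t) ^ 2
        = a * u t * (a + b * u t) := by
      field_simp
    rw [hexp]
    nlinarith
  have key := le_gronwallBound_of_liminf_deriv_right_le hzcont
    (fun x hx r hr =>
      ((hzderiv x (Ico_subset_Icc_self hx)).hasDerivWithinAt.liminf_right_slope_le hr))
    hz0 hbound 1 (by norm_num)
  rw [sub_zero, gronwallBound_ε0] at key
  -- key : z 1 ≤ δ / (a + b * δ) * Real.exp (a * 1)
  have h11 : (1:ℝ) ∈ Set.Icc (0:ℝ) 1 := by norm_num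
  have hd1 := hd 1 h11
  have hu1 := hpos 1 h11
  rw [mul_one] at key
  have key' : u 1 * (a + b * δ) ≤ δ * Real.exp a * (a + b * u 1) := by
    rw [hzdef] at key
    have := (div_le_div_iff₀ hd1 (by positivity : (0:ℝ) < a + b * δ)).mp
      (by simpa [div_mul_eq_mul_div] using key)
    linarith [this]
  rw [le_div_iff₀ hA]
  nlinarith [key']
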